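/- Fix t ∈ T and let K be the stochastic alternating class kernel built from the finite set F = {f_1, …, f_m} of class functions. For any f ∈ F, any element t′ ∈ B_t^∞ such that f(t′) = ⟨x, y⟩ ∈ X_i^f × Y_i^f, and any measurable sets U ∈ 𝒳_i^f and V ∈ 𝒴_i^f with A = f^{-1}(U × V): if v_i(x, V) > 0 and x ∈ U, then A ∈ R_t^∞. -/

import Mathlib

open MeasureTheory ProbabilityTheory Filter

universe u v

noncomputable section

/-- The `n`-th iterate of a Markov transition kernel: `kiter K 0` is the identity kernel and
`kiter K (n+1) (s, A) = ∫ K(s', A) (kiter K n)(s, ds')`, so `kiter K n = K^n` for `n ≥ 1`. -/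
def kiter {S : Type u} [MeasurableSpace S] (K : Kernel S S) : ℕ → Kernel S S
  | 0 => Kernel.id
  | n + 1 => K ∘ₖ kiter K n

/-- `K` is `π`-irreducible: from every point, every set of positive `π`-measure is reached
with positive probability after some number `n ≥ 1` of steps. -/
def PiIrreducible {S : Type u} [MeasurableSpace S] (K : Kernel S S) (π : Measure S) : Prop :=
  ∀ s : S, ∀ A : Set S, MeasurableSet A → 0 < π A → ∃ n : ℕ, 1 ≤ n ∧ 0 < kiter K n s A

/-- `π` is a stationary distribution of `K`: `∫ K(s, A) π(ds) = π(A)` for all measurable `A`. -/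
def StationaryFor {S : Type u} [MeasurableSpace S] (K : Kernel S S) (π : Measure S) : Prop :=
  ∀ A : Set S, MeasurableSet A → ∫⁻ s, K s A ∂π = π A

/-- `K` is periodic relative to `π`: there are `d ≥ 2` pairwise disjoint nonempty measurable
sets `E_0, …, E_{d-1}` and a `π`-null measurable set `N` covering `S` such that from `E_i` the
kernel moves to `E_{(i+1) mod d}` with probability one. -/
def PeriodicK {S : Type u} [MeasurableSpace S] (K : Kernel S S) (π : Measure S) : Prop :=
  ∃ d : ℕ, ∃ hd : 2 ≤ d, ∃ E : Fin d → Set S, ∃ N : Set S,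
    (∀ i, MeasurableSet (E i)) ∧ MeasurableSet N ∧ (∀ i, (E i).Nonempty) ∧
    Pairwise (fun i j => Disjoint (E i) (E j)) ∧
    (⋃ i, E i) ∪ N = Set.univ ∧ π N = 0 ∧
    ∀ i : Fin d, ∀ s ∈ E i, K s (E ⟨(i.1 + 1) % d, Nat.mod_lt _ (by omega)⟩) = 1

/-- `K` is aperiodic relative to `π` if it is not periodic. -/
def AperiodicK {S : Type u} [MeasurableSpace S] (K : Kernel S S) (π : Measure S) : Prop :=
  ¬ PeriodicK K π

/-- Total variation norm of a (bounded signed) set function: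
`‖λ‖ = sup_{A measurable} λ(A) − inf_{A measurable} λ(A)`. -/
def tvnorm {S : Type u} [MeasurableSpace S] (lam : Set S → ℝ) : ℝ :=
  (⨆ A : {A : Set S // MeasurableSet A}, lam A.1) - (⨅ A : {A : Set S // MeasurableSet A}, lam A.1)

/-- The iterates of `K` started at `s` converge to `π` in total variation norm:
`lim_{n→∞} ‖K^n(s, ·) − π‖ = 0`. -/
def TVConvergesTo {S : Type u} [MeasurableSpace S] (K : Kernel S S) (π : Measure S) (s : S) : Prop :=
  Tendsto (fun n : ℕ => tvnorm (fun A => (kiter K (n + 1) s A).toReal - (π A).toReal))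
    atTop (nhds 0)

/-- The data of the class-kernel setting for a single class function `f` on a probability
space `(T, Σ, π)`: a countable index set `I`, families of measurable spaces `(X i, 𝒳 i)` and
`(Y i, 𝒴 i)` whose disjoint union forms the generalized product space `C = ⨆ i, X i × Y i`,
an injective two-way measurable class function `f : T → C`, regular conditional probabilities
`v i : X i × 𝒴 i → [0,1]` disintegrating the (conditioned) pushforward `f_*π` on each class,
parameterized Markov transition kernels `K i x` on `(Y i, 𝒴 i)` measurable in `x`, and the
resulting class kernel `Kf` on `(T, Σ)` given by
`Kf(t, A) = (K i x)(y, {y' | ⟨x, y'⟩ ∈ f(A)})` where `f(t) = ⟨i, x, y⟩`. -/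
structure ClassKernelData (T : Type u) [MeasurableSpace T] (π : Measure T) where
  /-- the countable index set -/
  (I : Type v)
  [countI : Countable I]
  /-- the `X`-components of the generalized product space -/
  (X : I → Type v)
  /-- the `Y`-components of the generalized product space -/
  (Y : I → Type v)
  [mX : ∀ i, MeasurableSpace (X i)]
  [mY : ∀ i, MeasurableSpace (Y i)]
  /-- the class function `f : T → C = ⨆ i, X i × Y i` -/
  f : T → Σ i : I, X i × Y i
  f_inj : Function.Injective f
  f_meas : Measurable f
  /-- `f` is two-way measurable: images of measurable sets are measurable -/
  f_image : ∀ A : Set T, MeasurableSet A → MeasurableSet (f '' A)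
  /-- the regular conditional probabilities `v i : X i × 𝒴 i → [0,1]` -/
  v : ∀ i, X i → Measure (Y i)
  v_prob : ∀ i x, IsProbabilityMeasure (v i x)
  v_meas : ∀ i (V : Set (Y i)), MeasurableSet V → Measurable fun x => v i x V
  /-- the disintegration property: for each class `i` of positive `f_*π`-mass,
  `(f_*π)_i(U × V) = ∫_U v_i(x, V) (f_*π)_i(dx × Y_i)` (stated in unnormalized form, which is
  equivalent since the normalizing constant appears identically on both sides) -/
  v_eq : ∀ i : I, 0 < π.map f (Set.range (Sigma.mk i)) →
    ∀ (U : Set (X i)) (V : Set (Y i)), MeasurableSet U → MeasurableSet V →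
      (π.map f).comap (Sigma.mk i) (U ×ˢ V)
        = ∫⁻ x in U, v i x V ∂(((π.map f).comap (Sigma.mk i)).map Prod.fst)
  /-- the parameterized Markov transition kernels `K i x` on `(Y i, 𝒴 i)` -/
  K : ∀ i, X i → Kernel (Y i) (Y i)
  K_markov : ∀ i x, IsMarkovKernel (K i x)
  K_meas : ∀ i (y : Y i) (V : Set (Y i)), MeasurableSet V → Measurable fun x => K i x y V
  /-- the class kernel `Kf` on `(T, Σ)` -/
  Kf : Kernel T T
  Kf_markov : IsMarkovKernel Kf
  /-- the class kernel is given by `Kf(t, A) = (K i x)(y, {y' ∈ Y i | ⟨x, y'⟩ ∈ f(A)})`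
  where `f(t) = ⟨i, x, y⟩` -/
  Kf_eq : ∀ (t : T) (A : Set T), MeasurableSet A → ∀ (i : I) (x : X i) (y : Y i),
    f t = ⟨i, (x, y)⟩ →
      Kf t A = K i x y {y' : Y i | (⟨i, (x, y')⟩ : Σ j : I, X j × Y j) ∈ f '' A}

attribute [instance] ClassKernelData.countI ClassKernelData.mX ClassKernelData.mY

/-- The projection `f_x` of a class function onto the `X`-components. -/
def ClassKernelData.fx {T : Type u} [MeasurableSpace T] {π : Measure T}
    (d : ClassKernelData T π) : T → Σ i : d.I, d.X i :=
  fun t => ⟨(d.f t).1, (d.f t).2.1⟩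

/-- `R_t^∞`: the collection of measurable sets reachable from `t` by the kernel `K` in some
number `n ≥ 1` of steps with positive probability. -/
def Rinf {T : Type u} [MeasurableSpace T] (K : Kernel T T) (t : T) : Set (Set T) :=
  {A | MeasurableSet A ∧ ∃ n : ℕ, 1 ≤ n ∧ 0 < kiter K n t A}

/-- `B_t^∞`: the set of points `t'` such that every measurable set containing `t'` is
reachable from `t` by the kernel `K`. -/
def Binf {T : Type u} [MeasurableSpace T] (K : Kernel T T) (t : T) : Set T :=
  {t' | ∀ A : Set T, MeasurableSet A → t' ∈ A → A ∈ Rinf K t}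

/-- A finite family of class functions connects the probability space `(T, Σ, π)`:
for every measurable `A` and every pair `f, g` in the family, if
`π(f_x⁻¹(f_x(A)) ∩ g_x⁻¹((g_x(A))ᶜ)) = 0` and `π(f_x⁻¹((f_x(A))ᶜ) ∩ g_x⁻¹(g_x(A))) = 0`,
then `π(f_x⁻¹((f_x(A))ᶜ)) = 0` or `π(g_x⁻¹((g_x(A))ᶜ)) = 0`. -/
def Connects {T : Type u} [MeasurableSpace T] (π : Measure T) {m : ℕ}
    (D : Fin m → ClassKernelData.{u, v} T π) : Prop :=
  ∀ A : Set T, MeasurableSet A → ∀ k l : Fin m,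
    π ((D k).fx ⁻¹' ((D k).fx '' A) ∩ (D l).fx ⁻¹' ((D l).fx '' A)ᶜ) = 0 →
    π ((D k).fx ⁻¹' ((D k).fx '' A)ᶜ ∩ (D l).fx ⁻¹' ((D l).fx '' A)) = 0 →
    π ((D k).fx ⁻¹' ((D k).fx '' A)ᶜ) = 0 ∨ π ((D l).fx ⁻¹' ((D l).fx '' A)ᶜ) = 0


section AuxLemmas

lemma measurable_sigma_mk' {α : Type*} {β : α → Type*} [m : ∀ a, MeasurableSpace (β a)] (i : α) :
    Measurable (@Sigma.mk α β i) := fun _ hs => MeasurableSpace.measurableSet_iInf.1 hs i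

lemma measurableSet_sigma_mk_image {α : Type*} {β : α → Type*} [m : ∀ a, MeasurableSpace (β a)]
    (i : α) {M : Set (β i)} (hM : MeasurableSet M) :
    MeasurableSet (Sigma.mk i '' M) := by
  refine MeasurableSpace.measurableSet_iInf.2 fun a => ?_
  by_cases h : a = i
  · subst h
    show MeasurableSet[m a] (Sigma.mk a ⁻¹' (Sigma.mk a '' M))
    rwa [sigma_mk_preimage_image_eq_self]
  · show MeasurableSet[m a] (Sigma.mk a ⁻¹' (Sigma.mk i '' M))
    rw [sigma_mk_preimage_image' (Ne.symm h)]
    exact MeasurableSet.empty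

lemma kiter_zero {S : Type u} [MeasurableSpace S] (K : Kernel S S) : kiter K 0 = Kernel.id := by
  rw [kiter]

lemma kiter_succ {S : Type u} [MeasurableSpace S] (K : Kernel S S) (n : ℕ) :
    kiter K (n + 1) = K ∘ₖ kiter K n := by rw [kiter]

lemma kiter_apply' {S : Type u} [MeasurableSpace S] (K : Kernel S S) (n : ℕ) (s : S)
    {A : Set S} (hA : MeasurableSet A) :
    kiter K (n + 1) s A = ∫⁻ u, K u A ∂(kiter K n s) :=
  by rw [kiter_succ]; exact Kernel.comp_apply' _ _ _ hA

lemma kiter_add {S : Type u} [MeasurableSpace S] (K : Kernel S S) [IsSFiniteKernel K] (a b : ℕ) :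
    kiter K (a + b) = kiter K b ∘ₖ kiter K a := by
  induction b with
  | zero => rw [kiter_zero, Kernel.id_comp, Nat.add_zero]
  | succ n ih =>
      rw [show a + (n+1) = (a+n) + 1 from rfl, kiter_succ, kiter_succ, ih, Kernel.comp_assoc]

lemma kiter_le_of_le {S : Type u} [MeasurableSpace S] (K K' : Kernel S S) (c : ENNReal)
    (h : ∀ s (A : Set S), MeasurableSet A → c * K' s A ≤ K s A) :
    ∀ (n : ℕ) (s : S) (A : Set S), MeasurableSet A →
      c ^ n * kiter K' n s A ≤ kiter K n s A := by
  intro n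
  induction n with
  | zero => intro s A hA; rw [kiter_zero (K := K), kiter_zero (K := K')]; simp
  | succ n ih =>
    intro s A hA
    have hle : (c ^ n) • kiter K' n s ≤ kiter K n s :=
      Measure.le_iff.2 fun B hB => by
        simpa [Measure.smul_apply, smul_eq_mul] using ih s B hB
    calc c ^ (n + 1) * kiter K' (n + 1) s A
        = c ^ n * ∫⁻ u, c * K' u A ∂(kiter K' n s) := by
          rw [kiter_apply' K' n s hA, lintegral_const_mul _ (Kernel.measurable_coe K' hA)]
          ring
      _ = ∫⁻ u, c * K' u A ∂((c ^ n) • kiter K' n s) := by rw [lintegral_smul_measure, smul_eq_mul]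
      _ ≤ ∫⁻ u, c * K' u A ∂(kiter K n s) := lintegral_mono' hle le_rfl
      _ ≤ ∫⁻ u, K u A ∂(kiter K n s) := lintegral_mono fun u => h u A hA
      _ = kiter K (n + 1) s A := (kiter_apply' K n s hA).symm

lemma mem_Rinf_of_mem_Binf {S : Type u} [MeasurableSpace S] (K : Kernel S S) [IsSFiniteKernel K]
    (t t' : S) (ht' : t' ∈ Binf K t) {A : Set S} (hA : MeasurableSet A)
    {n₁ : ℕ} (hpos : 0 < kiter K n₁ t' A) : A ∈ Rinf K t := by
  set c := kiter K n₁ t' A with hc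
  set B : Set S := {s | c ≤ kiter K n₁ s A} with hBdef
  have hmeas : Measurable fun s => kiter K n₁ s A := Kernel.measurable_coe _ hA
  have hB : MeasurableSet B := measurableSet_le measurable_const hmeas
  obtain ⟨-, n₀, hn₀, hpos₀⟩ := ht' B hB (show c ≤ kiter K n₁ t' A from le_rfl)
  refine ⟨hA, n₀ + n₁, le_trans hn₀ (Nat.le_add_right _ _), ?_⟩
  have heq : kiter K (n₀ + n₁) t A = ∫⁻ s, kiter K n₁ s A ∂(kiter K n₀ t) := by
    rw [kiter_add K n₀ n₁]; exact Kernel.comp_apply' _ _ _ hA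
  have hge : c * kiter K n₀ t B ≤ ∫⁻ s, kiter K n₁ s A ∂(kiter K n₀ t) := by
    rw [← lintegral_indicator_const hB c]
    refine lintegral_mono fun s => ?_
    by_cases hs : s ∈ B
    · rw [Set.indicator_of_mem hs]; exact hs
    · simp [Set.indicator_of_notMem hs]
  rw [heq]
  exact lt_of_lt_of_le (ENNReal.mul_pos hpos.ne' hpos₀.ne') hge

namespace ClassKernelData

variable {T : Type u} [MeasurableSpace T] {π : Measure T}
variable (d : ClassKernelData.{u, v} T π)

/-- The trace on `Y i` of the image of a set `B ⊆ T`, at a given `x ∈ X i`. -/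
def Sset (i : d.I) (x : d.X i) (B : Set T) : Set (d.Y i) :=
  {y' | (⟨i, (x, y')⟩ : Σ j : d.I, d.X j × d.Y j) ∈ d.f '' B}

lemma measurable_mkpair (i : d.I) (x : d.X i) :
    Measurable (fun y' : d.Y i => (⟨i, (x, y')⟩ : Σ j : d.I, d.X j × d.Y j)) :=
  (measurable_sigma_mk' i).comp measurable_prodMk_left

lemma measurableSet_Sset (i : d.I) (x : d.X i) {B : Set T} (hB : MeasurableSet B) :
    MeasurableSet (d.Sset i x B) :=
  d.measurable_mkpair i x (d.f_image B hB)

lemma K_apply_Sset_univ (i : d.I) (x : d.X i) {y' : d.Y i} (hy' : y' ∈ d.Sset i x Set.univ) :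
    d.K i x y' (d.Sset i x Set.univ) = 1 := by
  haveI := d.Kf_markov
  obtain ⟨t₀, -, ht₀⟩ := hy'
  have h1 := d.Kf_eq t₀ Set.univ MeasurableSet.univ i x y' ht₀
  have h2 : d.Kf t₀ Set.univ = 1 := measure_univ
  rw [h1] at h2
  exact h2

lemma K_apply_compl_Sset_univ (i : d.I) (x : d.X i) {y' : d.Y i}
    (hy' : y' ∈ d.Sset i x Set.univ) :
    d.K i x y' (d.Sset i x Set.univ)ᶜ = 0 := by
  haveI := d.K_markov i x
  rw [measure_compl (d.measurableSet_Sset i x MeasurableSet.univ) (measure_ne_top _ _),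
    d.K_apply_Sset_univ i x hy', measure_univ, tsub_self]

lemma kiter_K_compl_Sset_univ (i : d.I) (x : d.X i) {y'' : d.Y i}
    (hy : y'' ∈ d.Sset i x Set.univ) (n : ℕ) :
    kiter (d.K i x) n y'' (d.Sset i x Set.univ)ᶜ = 0 := by
  haveI := d.K_markov i x
  have hRmeas : MeasurableSet (d.Sset i x Set.univ) :=
    d.measurableSet_Sset i x MeasurableSet.univ
  induction n with
  | zero =>
      rw [kiter_zero, Kernel.id_apply, Measure.dirac_apply' _ hRmeas.compl,
        Set.indicator_of_notMem (by simpa using hy)]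
  | succ n ih =>
      rw [kiter_apply' _ n _ hRmeas.compl]
      refine le_antisymm ?_ zero_le
      calc ∫⁻ u, d.K i x u (d.Sset i x Set.univ)ᶜ ∂(kiter (d.K i x) n y'')
          ≤ ∫⁻ u, (d.Sset i x Set.univ)ᶜ.indicator (fun _ => (1 : ENNReal)) u
              ∂(kiter (d.K i x) n y'') := by
            refine lintegral_mono fun u => ?_
            by_cases hu : u ∈ d.Sset i x Set.univ
            · rw [d.K_apply_compl_Sset_univ i x hu]; exact zero_le
            · have hu' : u ∈ (d.Sset i x Set.univ)ᶜ := hu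
              rw [Set.indicator_of_mem hu']
              exact prob_le_one
        _ = kiter (d.K i x) n y'' (d.Sset i x Set.univ)ᶜ :=
            by rw [lintegral_indicator_const hRmeas.compl, one_mul]
        _ = 0 := ih

lemma kiter_Kf_eq (i : d.I) (x : d.X i) :
    ∀ (n : ℕ) (t'' : T) (y'' : d.Y i),
      d.f t'' = ⟨i, (x, y'')⟩ → ∀ B : Set T, MeasurableSet B →
        kiter d.Kf n t'' B = kiter (d.K i x) n y'' (d.Sset i x B) := by
  classical
  have hRmeas : MeasurableSet (d.Sset i x Set.univ) :=
    d.measurableSet_Sset i x MeasurableSet.univ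
  intro n
  induction n with
  | zero =>
      intro t'' y'' h B hB
      have hiff : t'' ∈ B ↔ y'' ∈ d.Sset i x B := by
        constructor
        · intro hm; exact ⟨t'', hm, h⟩
        · rintro ⟨w, hw, hweq⟩
          have : w = t'' := d.f_inj (by rw [hweq, h])
          rwa [this] at hw
      rw [kiter_zero, kiter_zero, Kernel.id_apply, Kernel.id_apply,
        Measure.dirac_apply' _ hB, Measure.dirac_apply' _ (d.measurableSet_Sset i x hB)]
      simp [Set.indicator_apply, hiff]
  | succ n ih =>
      intro t'' y'' h B hB
      have hy'' : y'' ∈ d.Sset i x Set.univ := ⟨t'', Set.mem_univ t'', h⟩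
      -- the measurable selection map
      set ψ : d.Y i → T := fun y' =>
        if hy : y' ∈ d.Sset i x Set.univ then hy.choose else t'' with hψdef
      have hψ : ∀ y' (hy : y' ∈ d.Sset i x Set.univ),
          d.f (ψ y') = (⟨i, (x, y')⟩ : Σ j : d.I, d.X j × d.Y j) := by
        intro y' hy
        rw [hψdef]
        simp only [dif_pos hy]
        exact hy.choose_spec.2
      have hψmeas : Measurable ψ := by
        intro C hC
        have hpre : ψ ⁻¹' C =
            (d.Sset i x Set.univ ∩ d.Sset i x C) ∪
              ((d.Sset i x Set.univ)ᶜ ∩ (if t'' ∈ C then Set.univ else ∅)) := by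
          ext y'
          by_cases hy : y' ∈ d.Sset i x Set.univ
          · simp only [Set.mem_preimage, Set.mem_union, Set.mem_inter_iff, Set.mem_compl_iff,
              hy, true_and, not_true_eq_false, false_and, or_false]
            have : ψ y' ∈ C ↔ d.f (ψ y') ∈ d.f '' C := (d.f_inj.mem_set_image).symm
            rw [this, hψ y' hy]
            exact Iff.rfl
          · simp only [Set.mem_preimage, Set.mem_union, Set.mem_inter_iff, Set.mem_compl_iff,
              hy, false_and, false_or, not_false_eq_true, true_and]
            have : ψ y' = t'' := by rw [hψdef]; simp only [dif_neg hy]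
            rw [this]
            by_cases hm : t'' ∈ C <;> simp [hm]
        rw [hpre]
        refine (hRmeas.inter (d.measurableSet_Sset i x hC)).union (hRmeas.compl.inter ?_)
        by_cases hm : t'' ∈ C <;> simp [hm]
      have hae : ∀ᵐ y' ∂(kiter (d.K i x) n y''), y' ∈ d.Sset i x Set.univ := by
        rw [ae_iff]
        have : {y' | ¬ y' ∈ d.Sset i x Set.univ} = (d.Sset i x Set.univ)ᶜ := rfl
        rw [this]
        exact d.kiter_K_compl_Sset_univ i x hy'' n
      have hmap : kiter d.Kf n t'' = Measure.map ψ (kiter (d.K i x) n y'') := by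
        ext C hC
        rw [Measure.map_apply hψmeas hC, ih t'' y'' h C hC]
        refine measure_congr (Filter.eventuallyEq_set.2 ?_)
        filter_upwards [hae] with y' hy
        constructor
        · intro hyC
          show ψ y' ∈ C
          rw [← d.f_inj.mem_set_image, hψ y' hy]
          exact hyC
        · intro hyC
          show (⟨i, (x, y')⟩ : Σ j : d.I, d.X j × d.Y j) ∈ d.f '' C
          rw [← hψ y' hy]
          exact Set.mem_image_of_mem _ hyC
      calc kiter d.Kf (n + 1) t'' B
          = ∫⁻ s, d.Kf s B ∂(kiter d.Kf n t'') := kiter_apply' _ n _ hB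
        _ = ∫⁻ y', d.Kf (ψ y') B ∂(kiter (d.K i x) n y'') := by
            rw [hmap, lintegral_map (Kernel.measurable_coe d.Kf hB) hψmeas]
        _ = ∫⁻ y', d.K i x y' (d.Sset i x B) ∂(kiter (d.K i x) n y'') := by
            refine lintegral_congr_ae ?_
            filter_upwards [hae] with y' hy
            exact d.Kf_eq (ψ y') B hB i x y' (hψ y' hy)
        _ = kiter (d.K i x) (n + 1) y'' (d.Sset i x B) :=
            (kiter_apply' _ n _ (d.measurableSet_Sset i x hB)).symm

end ClassKernelData

end AuxLemmas

/-- Fix `t ∈ T` and let `K` be the stochastic alternating class kernel built from the finite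
family `D` of class functions with weights `p`. For any member `f = (D k).f` of the family,
any `t' ∈ B_t^∞` with `f(t') = ⟨x, y⟩ ∈ X i × Y i`, and any measurable `U ∈ 𝒳 i`, `V ∈ 𝒴 i`
with `A = f⁻¹(U × V)`: if `v i x V > 0` and `x ∈ U`, then `A ∈ R_t^∞`. -/
theorem stmt4 {T : Type u} [MeasurableSpace T] (π : Measure T) [IsProbabilityMeasure π]
    {m : ℕ} (D : Fin m → ClassKernelData.{u, v} T π)
    (hirr : ∀ k i x, PiIrreducible ((D k).K i x) ((D k).v i x))
    (haper : ∀ k i x, AperiodicK ((D k).K i x) ((D k).v i x))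
    (hstat : ∀ k i x, StationaryFor ((D k).K i x) ((D k).v i x))
    (p : Fin m → ENNReal) (hp : ∀ k, 0 < p k ∧ p k < 1) (hpsum : ∑ k, p k = 1)
    (K : Kernel T T) [IsMarkovKernel K]
    (hK : ∀ (t : T) (A : Set T), MeasurableSet A → K t A = ∑ k, p k * (D k).Kf t A)
    (t : T) (k : Fin m) (t' : T) (ht' : t' ∈ Binf K t)
    (i : (D k).I) (x : (D k).X i) (y : (D k).Y i)
    (hft : (D k).f t' = ⟨i, (x, y)⟩)
    (U : Set ((D k).X i)) (V : Set ((D k).Y i)) (hU : MeasurableSet U) (hV : MeasurableSet V)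
    (A : Set T) (hA : A = (D k).f ⁻¹' (Sigma.mk i '' (U ×ˢ V)))
    (hv : 0 < (D k).v i x V) (hxU : x ∈ U) :
    A ∈ Rinf K t := by
  classical
  haveI := (D k).Kf_markov
  haveI := (D k).K_markov i x
  have hUV : MeasurableSet (Sigma.mk i '' (U ×ˢ V)) :=
    measurableSet_sigma_mk_image (β := fun j => (D k).X j × (D k).Y j) i (hU.prod hV)
  have hAmeas : MeasurableSet A := hA ▸ (D k).f_meas hUV
  -- identify the trace of `A` on `Y i`
  have hmemSig : ∀ y' : (D k).Y i,
      ((⟨i, (x, y')⟩ : Σ j : (D k).I, (D k).X j × (D k).Y j) ∈ Sigma.mk i '' (U ×ˢ V)) ↔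
        y' ∈ V := by
    intro y'
    constructor
    · rintro ⟨⟨u, w⟩, huv, heq⟩
      have h2 : (u, w) = (x, y') := sigma_mk_injective (β := fun j => (D k).X j × (D k).Y j) heq
      rw [Prod.mk.injEq] at h2
      rw [← h2.2]
      exact huv.2
    · intro hyV
      exact ⟨(x, y'), ⟨hxU, hyV⟩, rfl⟩
  have hSA : (D k).Sset i x A = V ∩ (D k).Sset i x Set.univ := by
    ext y'
    constructor
    · rintro ⟨w, hwA, hw⟩
      rw [hA] at hwA
      refine ⟨(hmemSig y').1 (hw ▸ hwA), ⟨w, Set.mem_univ w, hw⟩⟩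
    · rintro ⟨hyV, ⟨w, -, hw⟩⟩
      refine ⟨w, ?_, hw⟩
      rw [hA, Set.mem_preimage, hw]
      exact (hmemSig y').2 hyV
  have hyR : y ∈ (D k).Sset i x Set.univ := ⟨t', Set.mem_univ t', hft⟩
  -- irreducibility gives positive mass on V after n₁ steps
  obtain ⟨n₁, hn₁, hpos⟩ := hirr k i x y V hV hv
  -- the chain stays in the range of f, so the trace of A also has positive mass
  have hposSA : 0 < kiter ((D k).K i x) n₁ y ((D k).Sset i x A) := by
    have hsub : V ⊆ (D k).Sset i x A ∪ ((D k).Sset i x Set.univ)ᶜ := by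
      intro y' hy'
      by_cases hr : y' ∈ (D k).Sset i x Set.univ
      · exact Or.inl (hSA ▸ ⟨hy', hr⟩)
      · exact Or.inr hr
    have hle : kiter ((D k).K i x) n₁ y V ≤ kiter ((D k).K i x) n₁ y ((D k).Sset i x A) := by
      calc kiter ((D k).K i x) n₁ y V
          ≤ kiter ((D k).K i x) n₁ y ((D k).Sset i x A ∪ ((D k).Sset i x Set.univ)ᶜ) :=
            measure_mono hsub
        _ ≤ kiter ((D k).K i x) n₁ y ((D k).Sset i x A) +
              kiter ((D k).K i x) n₁ y ((D k).Sset i x Set.univ)ᶜ := measure_union_le _ _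
        _ = kiter ((D k).K i x) n₁ y ((D k).Sset i x A) := by
            rw [(D k).kiter_K_compl_Sset_univ i x hyR n₁, add_zero]
    exact lt_of_lt_of_le hpos hle
  -- transfer to the class kernel Kf
  have hKf : 0 < kiter (D k).Kf n₁ t' A := by
    rw [(D k).kiter_Kf_eq i x n₁ t' y hft A hAmeas]
    exact hposSA
  -- compare with the alternating kernel K
  have hcmp : ∀ s (B : Set T), MeasurableSet B → p k * (D k).Kf s B ≤ K s B := by
    intro s B hB
    rw [hK s B hB]
    exact Finset.single_le_sum (f := fun l => p l * (D l).Kf s B)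
      (fun l _ => zero_le) (Finset.mem_univ k)
  have hKpos : 0 < kiter K n₁ t' A := by
    refine lt_of_lt_of_le ?_ (kiter_le_of_le K (D k).Kf (p k) hcmp n₁ t' A hAmeas)
    exact ENNReal.mul_pos (pow_ne_zero n₁ (hp k).1.ne') hKf.ne'
  exact mem_Rinf_of_mem_Binf K t t' ht' hAmeas hKpos
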